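/- Fix real numbers α, β with −π/2 ≤ α ≤ β ≤ π/2. Then there is a constant K (depending on α and β) such that for every integer n ≥ 1, the number of horizontal boxes in C_{α,β}(n) satisfies | |C_{α,β,h}(n)| − (sin β − sin α)·n | ≤ K. -/

import Mathlib

open Real Set Filter

/-- The open interior of the box `B_{i,j}(n) = [i/n,(i+1)/n] × [j/n,(j+1)/n]`. -/
def boxInt (n : ℕ) (i j : ℤ) : Set (ℝ × ℝ) :=
  {p | (i : ℝ) / n < p.1 ∧ p.1 < ((i : ℝ) + 1) / n ∧
       (j : ℝ) / n < p.2 ∧ p.2 < ((j : ℝ) + 1) / n}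

/-- The plane unit circle `C`. -/
def unitCircle : Set (ℝ × ℝ) := {p | p.1 ^ 2 + p.2 ^ 2 = 1}

/-- The approximation `X(n)` of a set `X ⊆ ℝ²`: the boxes (encoded by their index
pairs `(i,j) ∈ ℤ²`) whose open interior intersects `X`. -/
def approx (n : ℕ) (X : Set (ℝ × ℝ)) : Set (ℤ × ℤ) :=
  {ij | (boxInt n ij.1 ij.2 ∩ X).Nonempty}

/-- The open arc `C_{α,β} = {(cos t, sin t) : α < t < β}` of the unit circle. -/
def arc (α β : ℝ) : Set (ℝ × ℝ) :=
  {p | ∃ t : ℝ, α < t ∧ t < β ∧ p = (Real.cos t, Real.sin t)}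

/-- `p` lies on a vertical (left or right) side of the box `B_{i,j}(n)`. -/
def OnVerticalSide (n : ℕ) (i j : ℤ) (p : ℝ × ℝ) : Prop :=
  (p.1 = (i : ℝ) / n ∨ p.1 = ((i : ℝ) + 1) / n) ∧
  (j : ℝ) / n ≤ p.2 ∧ p.2 ≤ ((j : ℝ) + 1) / n

/-- `p` lies on a horizontal (bottom or top) side of the box `B_{i,j}(n)`. -/
def OnHorizontalSide (n : ℕ) (i j : ℤ) (p : ℝ × ℝ) : Prop :=
  (p.2 = (j : ℝ) / n ∨ p.2 = ((j : ℝ) + 1) / n) ∧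
  (i : ℝ) / n ≤ p.1 ∧ p.1 ≤ ((i : ℝ) + 1) / n

/-- The counter-clockwise oriented unit circle enters the box `B_{i,j}(n)` through
a vertical side: the box is vertical. -/
def IsVertical (n : ℕ) (i j : ℤ) : Prop :=
  ∃ t δ : ℝ, 0 < δ ∧ OnVerticalSide n i j (Real.cos t, Real.sin t) ∧
    ∀ s ∈ Set.Ioo t (t + δ), (Real.cos s, Real.sin s) ∈ boxInt n i j

/-- The counter-clockwise oriented unit circle enters the box `B_{i,j}(n)` through
a horizontal side: the box is horizontal. -/
def IsHorizontal (n : ℕ) (i j : ℤ) : Prop :=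
  ∃ t δ : ℝ, 0 < δ ∧ OnHorizontalSide n i j (Real.cos t, Real.sin t) ∧
    ∀ s ∈ Set.Ioo t (t + δ), (Real.cos s, Real.sin s) ∈ boxInt n i j

lemma sin_lip (x y : ℝ) : |Real.sin x - Real.sin y| ≤ |x - y| := by
  rw [Real.sin_sub_sin]
  have h1 : |Real.sin ((x-y)/2)| ≤ |(x-y)/2| := Real.abs_sin_le_abs
  have h2 : |Real.cos ((x+y)/2)| ≤ 1 := Real.abs_cos_le_one _
  have h3 : |2 * Real.sin ((x-y)/2) * Real.cos ((x+y)/2)|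
      = 2 * |Real.sin ((x-y)/2)| * |Real.cos ((x+y)/2)| := by
    rw [abs_mul, abs_mul, abs_two]
  have h4 : |(x-y)/2| = |x - y|/2 := by rw [abs_div, abs_two]
  have h5 : (0:ℝ) ≤ |Real.sin ((x-y)/2)| := abs_nonneg _
  nlinarith [abs_nonneg (x - y)]

lemma cos_lip (x y : ℝ) : |Real.cos x - Real.cos y| ≤ |x - y| := by
  rw [Real.cos_sub_cos]
  have h1 : |Real.sin ((x-y)/2)| ≤ |(x-y)/2| := Real.abs_sin_le_abs
  have h2 : |Real.sin ((x+y)/2)| ≤ 1 := Real.abs_sin_le_one _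
  have h3 : |-2 * Real.sin ((x+y)/2) * Real.sin ((x-y)/2)|
      = 2 * |Real.sin ((x+y)/2)| * |Real.sin ((x-y)/2)| := by
    rw [abs_mul, abs_mul]
    norm_num
  have h4 : |(x-y)/2| = |x - y|/2 := by rw [abs_div, abs_two]
  have h5 : (0:ℝ) ≤ |Real.sin ((x-y)/2)| := abs_nonneg _
  have h6 : (0:ℝ) ≤ |Real.sin ((x+y)/2)| := abs_nonneg _
  nlinarith [abs_nonneg (x - y)]

lemma horiz_entry {n : ℕ} (hn : 1 ≤ n) {i j : ℤ} (hi : 0 ≤ i) (h : IsHorizontal n i j) :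
    ∃ t δ : ℝ, 0 < δ ∧ Real.sin t = (j : ℝ) / n ∧
      Real.cos t = Real.sqrt (1 - ((j : ℝ) / n) ^ 2) ∧
      ∀ s ∈ Set.Ioo t (t + δ), (Real.cos s, Real.sin s) ∈ boxInt n i j := by
  obtain ⟨t, δ, hδ, hside, hbox⟩ := h
  have hn' : (0:ℝ) < n := by exact_mod_cast Nat.pos_of_ne_zero (by omega)
  have hin : (0:ℝ) ≤ (i : ℝ) / n := div_nonneg (by exact_mod_cast hi) hn'.le
  -- sin t = j / n
  have hsin : Real.sin t = (j : ℝ) / n := by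
    rcases hside.1 with h' | h'
    · exact h'
    · exfalso
      have hts : t < t + δ / 2 := by linarith
      obtain ⟨ξ, hξ, hslope⟩ := exists_hasDerivAt_eq_slope Real.sin Real.cos hts
        (Real.continuous_sin.continuousOn) (fun x _ => Real.hasDerivAt_sin x)
      have hξ2 : ξ ∈ Set.Ioo t (t + δ) := ⟨hξ.1, by linarith [hξ.2]⟩
      have h1 : (i:ℝ)/n < Real.cos ξ := (hbox ξ hξ2).1
      have h2 := (hbox (t + δ/2) ⟨hts, by linarith⟩).2.2.2
      have h'' : Real.sin t = ((j:ℝ) + 1) / n := h'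
      have hd2 : t + δ / 2 - t = δ / 2 := by ring
      have h3 : Real.sin (t + δ/2) - Real.sin t = Real.cos ξ * (δ / 2) := by
        rw [hslope, hd2]
        field_simp
      have hpos : 0 < Real.cos ξ * (δ / 2) :=
        mul_pos (lt_of_le_of_lt hin h1) (by linarith)
      simp only at h2
      rw [h''] at h3
      linarith
  -- cos t bounds via one-sided limit
  have hcont : Filter.Tendsto Real.cos (nhdsWithin t (Set.Ioi t)) (nhds (Real.cos t)) :=
    (Real.continuous_cos.tendsto t).mono_left nhdsWithin_le_nhds
  have hmem : Set.Ioo t (t + δ) ∈ nhdsWithin t (Set.Ioi t) :=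
    Ioo_mem_nhdsGT_of_mem ⟨le_refl t, by linarith⟩
  have hge : (i:ℝ)/n ≤ Real.cos t :=
    ge_of_tendsto hcont (Filter.mem_of_superset hmem (fun s hs => (hbox s hs).1.le))
  have hcos0 : 0 ≤ Real.cos t := le_trans hin hge
  have hcossq : Real.cos t ^ 2 = 1 - ((j:ℝ)/n) ^ 2 := by
    have h5 := Real.sin_sq_add_cos_sq t
    rw [hsin] at h5
    linarith
  have hcoseq : Real.cos t = Real.sqrt (1 - ((j:ℝ)/n) ^ 2) := by
    rw [← hcossq, Real.sqrt_sq hcos0]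
  exact ⟨t, δ, hδ, hsin, hcoseq, hbox⟩

lemma horiz_uniq {n : ℕ} (hn : 1 ≤ n) {i i' j : ℤ} (hi : 0 ≤ i) (hi' : 0 ≤ i')
    (h : IsHorizontal n i j) (h' : IsHorizontal n i' j) : i = i' := by
  have hn' : (0:ℝ) < n := by exact_mod_cast Nat.pos_of_ne_zero (by omega)
  obtain ⟨t, δ, hδ, hsin, hcos, hbox⟩ := horiz_entry hn hi h
  obtain ⟨t', δ', hδ', hsin', hcos', hbox'⟩ := horiz_entry hn hi' h'
  have hcc : Real.cos t' = Real.cos t := by rw [hcos, hcos']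
  have h1 : Real.cos (t' - t) = 1 := by
    rw [Real.cos_sub, hcc, hsin, hsin', ← hsin]
    nlinarith [Real.sin_sq_add_cos_sq t]
  obtain ⟨k, hk⟩ := (Real.cos_eq_one_iff _).mp h1
  set s₁ := t + min δ δ' / 2 with hs₁def
  have hmin : 0 < min δ δ' := lt_min hδ hδ'
  have hm1 : min δ δ' ≤ δ := min_le_left _ _
  have hm2 : min δ δ' ≤ δ' := min_le_right _ _
  have hA := hbox s₁ ⟨by simp only [hs₁def]; linarith, by simp only [hs₁def]; linarith⟩
  have hs2 : s₁ + (k:ℝ) * (2*π) ∈ Set.Ioo t' (t' + δ') := by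
    rw [hk]
    constructor
    · simp only [hs₁def]; linarith
    · simp only [hs₁def]; linarith
  have hB := hbox' _ hs2
  have e : Real.cos (s₁ + (k:ℝ)*(2*π)) = Real.cos s₁ := Real.cos_add_int_mul_two_pi s₁ k
  simp only [boxInt, Set.mem_setOf_eq] at hA hB
  rw [e] at hB
  have c1 : (i:ℝ)/n < ((i':ℝ)+1)/n := lt_trans hA.1 hB.2.1
  have c2 : (i':ℝ)/n < ((i:ℝ)+1)/n := lt_trans hB.1 hA.2.1
  rw [div_lt_div_iff₀ hn' hn'] at c1 c2
  have d1 : (i:ℝ) < (i':ℝ) + 1 := by nlinarith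
  have d2 : (i':ℝ) < (i:ℝ) + 1 := by nlinarith
  have e1 : i < i' + 1 := by exact_mod_cast d1
  have e2 : i' < i + 1 := by exact_mod_cast d2
  omega

lemma horiz_exists {α β : ℝ} (h0 : -(π/2) ≤ α) (hαβ : α ≤ β) (hβ : β ≤ π/2)
    {n : ℕ} (hn : 1 ≤ n) {j : ℤ}
    (hj1 : Real.sin α ≤ (j:ℝ)/n) (hj2 : (j:ℝ)/n < Real.sin β) :
    ∃ i : ℤ, (i, j) ∈ approx n (arc α β) ∧ IsHorizontal n i j := by
  have hn' : (0:ℝ) < n := by exact_mod_cast Nat.pos_of_ne_zero (by omega)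
  have hx1 : (-1:ℝ) ≤ (j:ℝ)/n := le_trans (Real.neg_one_le_sin α) hj1
  have hx2 : (j:ℝ)/n < 1 := lt_of_lt_of_le hj2 (Real.sin_le_one β)
  set x : ℝ := (j:ℝ)/n with hxdef
  set t₀ := Real.arcsin x with ht₀def
  have ht0s : Real.sin t₀ = x := Real.sin_arcsin hx1 hx2.le
  have ht0α : α ≤ t₀ := by
    have h1 : Real.arcsin (Real.sin α) ≤ Real.arcsin x := Real.monotone_arcsin hj1
    rwa [Real.arcsin_sin h0 (le_trans hαβ hβ)] at h1
  have ht0β : t₀ < β := by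
    have h1 : Real.arcsin x < Real.arcsin (Real.sin β) :=
      Real.strictMonoOn_arcsin ⟨hx1, hx2.le⟩
        ⟨Real.neg_one_le_sin β, Real.sin_le_one β⟩ hj2
    rwa [Real.arcsin_sin (le_trans h0 hαβ) hβ] at h1
  have ht0l : -(π/2) ≤ t₀ := Real.neg_pi_div_two_le_arcsin x
  have ht0u : t₀ < π/2 := Real.arcsin_lt_pi_div_two.mpr hx2
  set c := Real.cos t₀ with hcdef
  have hc0 : 0 ≤ c := Real.cos_nonneg_of_mem_Icc ⟨ht0l, ht0u.le⟩
  have hpi : 0 < π := Real.pi_pos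
  -- assembly helper
  have assemble : ∀ i : ℤ, (i:ℝ)/n ≤ c → c ≤ ((i:ℝ)+1)/n →
      (∃ δ : ℝ, 0 < δ ∧ ∀ s ∈ Set.Ioo t₀ (t₀+δ),
        (Real.cos s, Real.sin s) ∈ boxInt n i j) →
      (i, j) ∈ approx n (arc α β) ∧ IsHorizontal n i j := by
    rintro i hi1 hi2 ⟨δ, hδ, hbox⟩
    have hside : OnHorizontalSide n i j (Real.cos t₀, Real.sin t₀) :=
      ⟨Or.inl (by rw [ht0s]), hi1, hi2⟩
    refine ⟨?_, t₀, δ, hδ, hside, hbox⟩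
    have hε : 0 < min δ (β - t₀) := lt_min hδ (by linarith)
    have hεa : min δ (β - t₀) ≤ δ := min_le_left _ _
    have hεb : min δ (β - t₀) ≤ β - t₀ := min_le_right _ _
    set s := t₀ + min δ (β - t₀) / 2 with hsdef
    refine ⟨(Real.cos s, Real.sin s), hbox s ⟨by simp only [hsdef]; linarith,
      by simp only [hsdef]; linarith⟩, s, by simp only [hsdef]; linarith,
      by simp only [hsdef]; linarith, rfl⟩
  rcases le_or_gt 0 j with hj | hj
  · -- j ≥ 0 : t₀ ∈ [0, π/2), cos decreasing
    have hx0 : 0 ≤ x := div_nonneg (by exact_mod_cast hj) hn'.le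
    have ht00 : 0 ≤ t₀ := Real.arcsin_nonneg.mpr hx0
    set i : ℤ := ⌈(n:ℝ) * c⌉ - 1 with hidef
    have hi1 : (i:ℝ) < (n:ℝ) * c := by
      have := Int.ceil_lt_add_one ((n:ℝ)*c)
      simp only [hidef]
      push_cast
      linarith
    have hi2 : (n:ℝ) * c ≤ (i:ℝ) + 1 := by
      have := Int.le_ceil ((n:ℝ)*c)
      simp only [hidef]
      push_cast
      linarith
    have hi1' : (i:ℝ)/n < c := by rw [div_lt_iff₀ hn']; linarith
    have hi2' : c ≤ ((i:ℝ)+1)/n := by rw [le_div_iff₀ hn']; linarith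
    refine ⟨i, assemble i hi1'.le hi2' ?_⟩
    set δ := min (min (c - (i:ℝ)/n) (1/n)) (π/2 - t₀) with hδdef
    have hδ : 0 < δ := by
      apply lt_min (lt_min (by linarith) (by positivity)) (by linarith)
    refine ⟨δ, hδ, fun s hs => ?_⟩
    obtain ⟨hs1, hs2⟩ := hs
    have hδa : δ ≤ c - (i:ℝ)/n := le_trans (min_le_left _ _) (min_le_left _ _)
    have hδb : δ ≤ 1/n := le_trans (min_le_left _ _) (min_le_right _ _)
    have hδc : δ ≤ π/2 - t₀ := min_le_right _ _
    have hsu : s < π/2 := by linarith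
    have hcos_lt : Real.cos s < c :=
      Real.strictAntiOn_cos ⟨ht00, by linarith⟩ ⟨by linarith, by linarith⟩ hs1
    have hclip : |Real.cos s - c| ≤ s - t₀ := by
      have := cos_lip s t₀
      rwa [abs_of_pos (by linarith : (0:ℝ) < s - t₀)] at this
    have hslip : |Real.sin s - x| ≤ s - t₀ := by
      have := sin_lip s t₀
      rw [ht0s] at this
      rwa [abs_of_pos (by linarith : (0:ℝ) < s - t₀)] at this
    have hsin_gt : x < Real.sin s := by
      have := Real.strictMonoOn_sin ⟨ht0l, ht0u.le⟩ ⟨by linarith, hsu.le⟩ hs1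
      rwa [ht0s] at this
    have habs1 := abs_le.mp hclip
    have habs2 := abs_le.mp hslip
    refine ⟨?_, ?_, ?_, ?_⟩
    · simp only; linarith
    · simp only; linarith
    · simp only [← hxdef]; linarith
    · simp only
      have he : ((j:ℝ)+1)/n = x + 1/n := by rw [hxdef]; ring
      linarith
  · -- j < 0 : t₀ ∈ [-π/2, 0), cos increasing
    have hx0 : x < 0 := div_neg_of_neg_of_pos (by exact_mod_cast hj) hn'
    have ht00 : t₀ < 0 := by
      have h1 : 0 < Real.arcsin (-x) := Real.arcsin_pos.mpr (by linarith)
      rw [Real.arcsin_neg] at h1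
      simp only [ht₀def]
      linarith
    set i : ℤ := ⌊(n:ℝ) * c⌋ with hidef
    have hi1 : (i:ℝ) ≤ (n:ℝ) * c := Int.floor_le _
    have hi2 : (n:ℝ) * c < (i:ℝ) + 1 := Int.lt_floor_add_one _
    have hi1' : (i:ℝ)/n ≤ c := by rw [div_le_iff₀ hn']; linarith
    have hi2' : c < ((i:ℝ)+1)/n := by rw [lt_div_iff₀ hn']; linarith
    refine ⟨i, assemble i hi1' hi2'.le ?_⟩
    set δ := min (min (((i:ℝ)+1)/n - c) (1/n)) (-t₀) with hδdef
    have hδ : 0 < δ := by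
      apply lt_min (lt_min (by linarith) (by positivity)) (by linarith)
    refine ⟨δ, hδ, fun s hs => ?_⟩
    obtain ⟨hs1, hs2⟩ := hs
    have hδa : δ ≤ ((i:ℝ)+1)/n - c := le_trans (min_le_left _ _) (min_le_left _ _)
    have hδb : δ ≤ 1/n := le_trans (min_le_left _ _) (min_le_right _ _)
    have hδc : δ ≤ -t₀ := min_le_right _ _
    have hsu : s < 0 := by linarith
    have hcos_gt : c < Real.cos s := by
      have h1 : Real.cos (-t₀) < Real.cos (-s) :=
        Real.strictAntiOn_cos ⟨by linarith, by linarith⟩ ⟨by linarith, by linarith⟩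
          (by linarith)
      rwa [Real.cos_neg, Real.cos_neg] at h1
    have hclip : |Real.cos s - c| ≤ s - t₀ := by
      have := cos_lip s t₀
      rwa [abs_of_pos (by linarith : (0:ℝ) < s - t₀)] at this
    have hslip : |Real.sin s - x| ≤ s - t₀ := by
      have := sin_lip s t₀
      rw [ht0s] at this
      rwa [abs_of_pos (by linarith : (0:ℝ) < s - t₀)] at this
    have hsin_gt : x < Real.sin s := by
      have := Real.strictMonoOn_sin ⟨ht0l, ht0u.le⟩ ⟨by linarith, by linarith⟩ hs1
      rwa [ht0s] at this
    have habs1 := abs_le.mp hclip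
    have habs2 := abs_le.mp hslip
    refine ⟨?_, ?_, ?_, ?_⟩
    · simp only; linarith
    · simp only; linarith
    · simp only [← hxdef]; linarith
    · simp only
      have he : ((j:ℝ)+1)/n = x + 1/n := by rw [hxdef]; ring
      linarith

theorem count_horizontal_boxes (α β : ℝ) (h0 : -(Real.pi / 2) ≤ α) (hαβ : α ≤ β)
    (hβ : β ≤ Real.pi / 2) :
    ∃ K : ℝ, ∀ n : ℕ, 1 ≤ n →
      |({ij ∈ approx n (arc α β) | IsHorizontal n ij.1 ij.2}.ncard : ℝ)
        - (Real.sin β - Real.sin α) * n| ≤ K := by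
  refine ⟨2, fun n hn => ?_⟩
  have hn' : (0:ℝ) < n := by exact_mod_cast Nat.pos_of_ne_zero (by omega)
  set a := Real.sin α with hadef
  set b := Real.sin β with hbdef
  set S := {ij ∈ approx n (arc α β) | IsHorizontal n ij.1 ij.2} with hSdef
  -- every box in S contains an arc point
  have F0 : ∀ ij ∈ S, ∃ s : ℝ, α < s ∧ s < β ∧
      (Real.cos s, Real.sin s) ∈ boxInt n ij.1 ij.2 := by
    rintro ij ⟨⟨p, hp1, t, ht1, ht2, hpt⟩, -⟩
    exact ⟨t, ht1, ht2, by rwa [hpt] at hp1⟩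
  have F1 : ∀ ij ∈ S, 0 ≤ ij.1 := by
    intro ij hij
    obtain ⟨s, hs1, hs2, hbox⟩ := F0 ij hij
    have hcs : 0 < Real.cos s := Real.cos_pos_of_mem_Ioo ⟨by linarith, by linarith⟩
    have h2 : Real.cos s < ((ij.1:ℝ)+1)/n := hbox.2.1
    have h3 : (0:ℝ) < (ij.1:ℝ) + 1 := by
      by_contra hc
      push_neg at hc
      have : ((ij.1:ℝ)+1)/n ≤ 0 := div_nonpos_of_nonpos_of_nonneg hc hn'.le
      linarith
    have : (0:ℤ) < ij.1 + 1 := by exact_mod_cast h3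
    omega
  have F2 : ∀ ij ∈ S, a * n - 1 < (ij.2:ℝ) ∧ (ij.2:ℝ) < b * n := by
    intro ij hij
    obtain ⟨s, hs1, hs2, hbox⟩ := F0 ij hij
    have hsa : a < Real.sin s :=
      Real.strictMonoOn_sin ⟨h0, by linarith⟩ ⟨by linarith, by linarith⟩ hs1
    have hsb : Real.sin s < b :=
      Real.strictMonoOn_sin ⟨by linarith, by linarith⟩ ⟨by linarith, hβ⟩ hs2
    have h1 : (ij.2:ℝ)/n < Real.sin s := hbox.2.2.1
    have h2 : Real.sin s < ((ij.2:ℝ)+1)/n := hbox.2.2.2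
    rw [div_lt_iff₀ hn'] at h1
    rw [lt_div_iff₀ hn'] at h2
    constructor <;> nlinarith
  have hinj : Set.InjOn Prod.snd S := by
    intro p hp q hq he
    have h1 : p.1 = q.1 := by
      apply horiz_uniq hn (F1 p hp) (F1 q hq) hp.2
      rw [he]
      exact hq.2
    exact Prod.ext h1 he
  -- upper bound
  have himg : Prod.snd '' S ⊆ ↑(Finset.Ico (⌈a*n⌉ - 1) ⌈b*n⌉) := by
    rintro j ⟨ij, hij, rfl⟩
    obtain ⟨hl, hr⟩ := F2 ij hij
    simp only [Finset.coe_Ico, Set.mem_Ico]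
    constructor
    · have : ⌈a*(n:ℝ)⌉ ≤ ij.2 + 1 := Int.ceil_le.mpr (by push_cast; linarith)
      omega
    · exact Int.lt_ceil.mpr hr
  have hfin : S.Finite :=
    Set.Finite.of_finite_image ((Finset.finite_toSet _).subset himg) hinj
  have hub : S.ncard ≤ (⌈b*n⌉ - ⌈a*n⌉ + 1).toNat := by
    have h1 : S.ncard = (Prod.snd '' S).ncard := (Set.ncard_image_of_injOn hinj).symm
    have h2 : (Prod.snd '' S).ncard ≤ (↑(Finset.Ico (⌈a*n⌉ - 1) ⌈b*n⌉) : Set ℤ).ncard :=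
      Set.ncard_le_ncard himg (Finset.finite_toSet _)
    rw [Set.ncard_coe_finset, Int.card_Ico] at h2
    omega
  -- lower bound
  have hex : ∀ j : ℤ, ∃ i : ℤ, j ∈ Finset.Ico ⌈a*n⌉ ⌈b*n⌉ → (i, j) ∈ S := by
    intro j
    by_cases hjT : j ∈ Finset.Ico ⌈a*(n:ℝ)⌉ ⌈b*(n:ℝ)⌉
    · rw [Finset.mem_Ico] at hjT
      have hj1 : a ≤ (j:ℝ)/n := by
        rw [le_div_iff₀ hn']
        have h1 : a * n ≤ (⌈a*(n:ℝ)⌉ : ℝ) := Int.le_ceil _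
        have h2 : ((⌈a*(n:ℝ)⌉ : ℤ):ℝ) ≤ (j:ℝ) := by exact_mod_cast hjT.1
        linarith
      have hj2 : (j:ℝ)/n < b := by
        rw [div_lt_iff₀ hn']
        exact_mod_cast Int.lt_ceil.mp hjT.2
      obtain ⟨i, hi1, hi2⟩ := horiz_exists h0 hαβ hβ hn hj1 hj2
      exact ⟨i, fun _ => ⟨hi1, hi2⟩⟩
    · exact ⟨0, fun h => absurd h hjT⟩
  choose f hf using hex
  have hlb : (Finset.Ico ⌈a*(n:ℝ)⌉ ⌈b*(n:ℝ)⌉).card ≤ S.ncard := by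
    rw [Set.ncard_eq_toFinset_card _ hfin]
    apply Finset.card_le_card_of_injOn (fun j => (f j, j))
    · intro j hj
      rw [Finset.mem_coe, Set.Finite.mem_toFinset]
      exact hf j hj
    · intro p _ q _ he
      exact congrArg Prod.snd he
  rw [Int.card_Ico] at hlb
  -- integer bounds
  have hab : a ≤ b := by
    rcases eq_or_lt_of_le hαβ with h | h
    · rw [hadef, hbdef, h]
    · exact (Real.strictMonoOn_sin ⟨h0, by linarith⟩ ⟨by linarith, hβ⟩ h).le
  have habn : a * n ≤ b * n := by nlinarith
  have hcc : ⌈a*(n:ℝ)⌉ ≤ ⌈b*(n:ℝ)⌉ := Int.ceil_le_ceil habn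
  have hm_lb : (⌈b*(n:ℝ)⌉ - ⌈a*(n:ℝ)⌉ : ℤ) ≤ (S.ncard : ℤ) := by
    have h1 := Int.self_le_toNat (⌈b*(n:ℝ)⌉ - ⌈a*(n:ℝ)⌉)
    have h2 : ((⌈b*(n:ℝ)⌉ - ⌈a*(n:ℝ)⌉).toNat : ℤ) ≤ (S.ncard : ℤ) := by
      exact_mod_cast hlb
    omega
  have hm_ub : (S.ncard : ℤ) ≤ ⌈b*(n:ℝ)⌉ - ⌈a*(n:ℝ)⌉ + 1 := by
    have h2 : ((⌈b*(n:ℝ)⌉ - ⌈a*(n:ℝ)⌉ + 1).toNat : ℤ)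
        = ⌈b*(n:ℝ)⌉ - ⌈a*(n:ℝ)⌉ + 1 := Int.toNat_of_nonneg (by omega)
    have h3 : ((S.ncard : ℕ) : ℤ) ≤ ((⌈b*(n:ℝ)⌉ - ⌈a*(n:ℝ)⌉ + 1).toNat : ℤ) := by
      exact_mod_cast hub
    omega
  -- real bounds
  have c1 : ((⌈b*(n:ℝ)⌉ - ⌈a*(n:ℝ)⌉ : ℤ):ℝ) ≤ (S.ncard:ℝ) := by exact_mod_cast hm_lb
  have c2 : (S.ncard:ℝ) ≤ ((⌈b*(n:ℝ)⌉ - ⌈a*(n:ℝ)⌉ + 1 : ℤ):ℝ) := by exact_mod_cast hm_ub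
  push_cast at c1 c2
  have r1 : b * n ≤ (⌈b*(n:ℝ)⌉:ℝ) := Int.le_ceil _
  have r2 : a * n ≤ (⌈a*(n:ℝ)⌉:ℝ) := Int.le_ceil _
  have r3 : (⌈b*(n:ℝ)⌉:ℝ) < b * n + 1 := Int.ceil_lt_add_one _
  have r4 : (⌈a*(n:ℝ)⌉:ℝ) < a * n + 1 := Int.ceil_lt_add_one _
  have hring : (b - a) * (n:ℝ) = b * n - a * n := by ring
  rw [abs_le]
  constructor <;> linarith
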